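/- arXiv:2404.09891 — 2 statements merged into one kernel-verified Lean document; each statement's English description precedes it below -/
import Mathlib

section
/- For integers 1 ≤ m ≤ n, the sum over k from m to n of [n,k] * {k,m} * (-2)^(k-m) equals (n!/m!) * C(m, n-m) * (-2)^(m-n). -/
open Finset

/-- Unsigned Stirling numbers of the first kind. -/
def stirling1 : ℕ → ℕ → ℕ
  | 0, 0 => 1
  | 0, _ + 1 => 0
  | _ + 1, 0 => 0
  | n + 1, k + 1 => n * stirling1 n (k + 1) + stirling1 n k

/-- Stirling numbers of the second kind. -/
def stirling2 : ℕ → ℕ → ℕ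
  | 0, 0 => 1
  | 0, _ + 1 => 0
  | _ + 1, 0 => 0
  | n + 1, k + 1 => (k + 1) * stirling2 n (k + 1) + stirling2 n k

/-- Generalized binomial coefficient `C(x, r) = x(x-1)⋯(x-r+1)/r!` in a ℚ-algebra. -/
noncomputable def gchoose {R : Type*} [CommRing R] [Algebra ℚ R] (x : R) (r : ℕ) : R :=
  algebraMap ℚ R ((r.factorial : ℚ)⁻¹) * ∏ i ∈ Finset.range r, (x - i)

lemma stirling1_eq_zero : ∀ n k, n < k → stirling1 n k = 0
  | 0, _ + 1, _ => by simp [stirling1]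
  | n + 1, k + 1, h => by
    have h1 := stirling1_eq_zero n (k + 1) (by omega)
    have h2 := stirling1_eq_zero n k (by omega)
    simp [stirling1, h1, h2]

lemma stirling2_eq_zero : ∀ k m, k < m → stirling2 k m = 0
  | 0, _ + 1, _ => by simp [stirling2]
  | k + 1, m + 1, h => by
    have h1 := stirling2_eq_zero k (m + 1) (by omega)
    have h2 := stirling2_eq_zero k m (by omega)
    simp [stirling2, h1, h2]

def T (n m : ℕ) : ℚ := ∑ k ∈ range (n + 1), (stirling1 n k : ℚ) * stirling2 k m * (-2) ^ k

lemma S1_eq (n m : ℕ) :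
    ∑ k ∈ range (n + 1), (stirling1 n (k + 1) : ℚ) * stirling2 (k + 1) (m + 1) * (-2) ^ (k + 1)
      = T n (m + 1) := by
  have h2 : ∑ k ∈ range (n + 2), (stirling1 n k : ℚ) * stirling2 k (m + 1) * (-2) ^ k
      = T n (m + 1) := by
    rw [Finset.sum_range_succ, stirling1_eq_zero n (n + 1) (by omega)]
    simp [T]
  rw [← h2]
  conv_rhs => rw [Finset.sum_range_succ']
  rw [stirling2_eq_zero 0 (m + 1) (by omega)]
  simp

lemma T_rec' (n m : ℕ) :
    T (n + 1) (m + 1) = n * T n (m + 1) + (-2) * ((m + 1) * T n (m + 1) + T n m) := by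
  have key : ∀ k, (stirling1 (n+1) (k+1) : ℚ) * stirling2 (k+1) (m+1) * (-2)^(k+1)
      = n * ((stirling1 n (k+1) : ℚ) * stirling2 (k+1) (m+1) * (-2)^(k+1))
        + ((-2) * ((m+1) * ((stirling1 n k : ℚ) * stirling2 k (m+1) * (-2)^k))
          + (-2) * ((stirling1 n k : ℚ) * stirling2 k m * (-2)^k)) := by
    intro k
    have e1 : (stirling1 (n+1) (k+1) : ℚ) = n * stirling1 n (k+1) + stirling1 n k := by
      simp [stirling1]
    have e2 : (stirling2 (k+1) (m+1) : ℚ) = (m+1) * stirling2 k (m+1) + stirling2 k m := by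
      simp [stirling2]
    rw [e1, e2]; ring
  have tB : ∑ k ∈ range (n + 1), (stirling1 n k : ℚ) * stirling2 k (m + 1) * (-2) ^ k = T n (m + 1) := rfl
  have tC : ∑ k ∈ range (n + 1), (stirling1 n k : ℚ) * stirling2 k m * (-2) ^ k = T n m := rfl
  have h0 : (stirling1 (n + 1) 0 : ℚ) = 0 := by simp [stirling1]
  rw [T, Finset.sum_range_succ']
  simp only [key]
  rw [Finset.sum_add_distrib, Finset.sum_add_distrib, ← Finset.mul_sum, ← Finset.mul_sum,
    ← Finset.mul_sum, ← Finset.mul_sum, S1_eq, tB, tC, h0]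
  ring

lemma key (m r : ℕ) :
    ((m : ℚ) + r + 2) * ((m + 1).choose (r + 1)) =
      2 * ((m : ℚ) + 1 - r) * ((m + 1).choose r) + ((m : ℚ) + 1) * (m.choose (r + 1)) := by
  have h1 : ((r : ℚ) + 1) * ((m + 1).choose (r + 1)) = ((m : ℚ) + 1 - r) * ((m + 1).choose r) := by
    rcases le_or_gt r (m + 1) with h | h
    · have := congrArg (Nat.cast : ℕ → ℚ) (Nat.choose_succ_right_eq (m + 1) r)
      push_cast [Nat.cast_sub h] at this
      linarith
    · rw [Nat.choose_eq_zero_of_lt h, Nat.choose_eq_zero_of_lt (by omega)]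
      simp
  have h2 : ((m : ℚ) + 1) * (m.choose (r + 1)) = ((m : ℚ) - r) * ((m + 1).choose (r + 1)) := by
    rcases le_or_gt (r + 1) (m + 1) with h | h
    · have := congrArg (Nat.cast : ℕ → ℚ) (Nat.choose_mul_succ_eq m (r + 1))
      have hs : (m + 1 : ℕ) - (r + 1) = m - r := by omega
      rw [hs] at this
      push_cast [Nat.cast_sub (by omega : r ≤ m)] at this
      linarith
    · rw [Nat.choose_eq_zero_of_lt (by omega), Nat.choose_eq_zero_of_lt h]
      simp
  linear_combination 2 * h1 - h2

lemma T_eq_zero (n m : ℕ) (h : n < m) : T n m = 0 := by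
  apply Finset.sum_eq_zero
  intro k hk
  rw [Finset.mem_range] at hk
  rw [stirling2_eq_zero k m (by omega)]
  simp

lemma T_zero_right (n : ℕ) : T (n + 1) 0 = 0 := by
  apply Finset.sum_eq_zero
  intro k _
  match k with
  | 0 => simp [stirling1]
  | k + 1 => simp [stirling2]

lemma T_mul : ∀ n m, m ≤ n →
    T n m * m.factorial = (n.factorial : ℚ) * m.choose (n - m) * (-2 : ℚ) ^ (2 * (m : ℤ) - n) := by
  intro n
  induction n with
  | zero =>
    intro m hm
    interval_cases m
    simp [T, stirling1, stirling2]
  | succ n ih =>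
    intro m hm
    have hz : (-2 : ℚ) ≠ 0 := by norm_num
    match m with
    | 0 =>
      rw [T_zero_right, Nat.choose_eq_zero_of_lt (by omega : (0:ℕ) < n + 1 - 0)]
      simp
    | m' + 1 =>
      rw [T_rec' n m']
      rcases eq_or_lt_of_le hm with he | hlt
      · -- m' = n
        have hm' : m' = n := by omega
        subst hm'
        have h0 : T m' (m' + 1) = 0 := T_eq_zero m' (m' + 1) (by omega)
        have I := ih m' le_rfl
        rw [h0]
        rw [Nat.sub_self] at I
        have hfacs : ((m' + 1).factorial : ℚ) = ((m' : ℚ) + 1) * m'.factorial := by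
          rw [Nat.factorial_succ]; push_cast; ring
        have hsub : m' + 1 - (m' + 1) = 0 := by omega
        rw [hsub, hfacs]
        have ez1 : (2 * ((m' : ℤ) + 1) - (m' + 1)) = ((m' : ℤ)) + 1 := by push_cast; ring
        have ez0 : (2 * (m' : ℤ) - m') = (m' : ℤ) := by ring
        push_cast [ez1, ez0, Nat.choose_zero_right] at I ⊢
        rw [zpow_add_one₀ hz]
        linear_combination (-2 * ((m' : ℚ) + 1)) * I
      · -- m' + 1 ≤ n
        have hle : m' + 1 ≤ n := by omega
        obtain ⟨r, rfl⟩ : ∃ r, n = m' + 1 + r := ⟨n - (m' + 1), by omega⟩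
        have I1 := ih (m' + 1) hle
        have I2 := ih m' (by omega)
        have hs1 : m' + 1 + r - (m' + 1) = r := by omega
        have hs2 : m' + 1 + r - m' = r + 1 := by omega
        have hs3 : m' + 1 + r + 1 - (m' + 1) = r + 1 := by omega
        rw [hs1] at I1
        rw [hs2] at I2
        rw [hs3]
        have hfacs : ((m' + 1).factorial : ℚ) = ((m' : ℚ) + 1) * m'.factorial := by
          rw [Nat.factorial_succ]; push_cast; ring
        have hfacn : ((m' + 1 + r + 1).factorial : ℚ) = ((m' : ℚ) + r + 2) * (m' + 1 + r).factorial := by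
          rw [show m' + 1 + r + 1 = (m' + 1 + r) + 1 from rfl, Nat.factorial_succ]; push_cast; ring
        have ez1 : (2 * ((m' : ℤ) + 1) - (m' + 1 + r + 1)) = ((m' : ℤ) - r - 1) + 1 := by push_cast; ring
        have ez2 : (2 * ((m' : ℤ) + 1) - (m' + 1 + r)) = ((m' : ℤ) - r - 1) + 2 := by push_cast; ring
        have ez3 : (2 * (m' : ℤ) - (m' + 1 + r)) = ((m' : ℤ) - r - 1) := by push_cast; ring
        push_cast [ez1, ez2, ez3] at I1 I2 ⊢
        rw [zpow_add₀ hz _ 1, zpow_add₀ hz _ 2] at *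
        rw [hfacs, hfacn]
        rw [hfacs] at I1
        have hk := key m' r
        have hzp1 : (-2 : ℚ) ^ (1 : ℤ) = -2 := by norm_num
        have hzp2 : (-2 : ℚ) ^ (2 : ℤ) = 4 := by norm_num
        rw [hzp1, hzp2] at *
        linear_combination ((m' + 1 + r : ℚ) - 2 * ((m' : ℚ) + 1)) * I1 + (-2 * ((m' : ℚ) + 1)) * I2 +
          2 * ((m' + 1 + r).factorial : ℚ) * (-2 : ℚ) ^ ((m' : ℤ) - r - 1) * hk

theorem stmt8 (m n : ℕ) (hm : 1 ≤ m) (hmn : m ≤ n) :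
    ∑ k ∈ Finset.Icc m n, (stirling1 n k : ℚ) * stirling2 k m * (-2 : ℚ) ^ (k - m) =
      (n.factorial : ℚ) / m.factorial * m.choose (n - m) * (-2 : ℚ) ^ ((m : ℤ) - n) := by
  have hz : (-2 : ℚ) ≠ 0 := by norm_num
  have hstep : ∀ k ∈ Finset.Icc m n,
      (stirling1 n k : ℚ) * stirling2 k m * (-2 : ℚ) ^ (k - m) =
        (stirling1 n k : ℚ) * stirling2 k m * (-2 : ℚ) ^ k * ((-2 : ℚ) ^ m)⁻¹ := by
    intro k hk
    rw [Finset.mem_Icc] at hk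
    rw [pow_sub₀ _ hz hk.1]
    ring
  rw [Finset.sum_congr rfl hstep, ← Finset.sum_mul]
  have hIcc : ∑ k ∈ Finset.Icc m n, (stirling1 n k : ℚ) * stirling2 k m * (-2 : ℚ) ^ k = T n m := by
    rw [T]
    apply Finset.sum_subset
    · intro k hk
      rw [Finset.mem_Icc] at hk
      rw [Finset.mem_range]
      omega
    · intro k hk hk2
      rw [Finset.mem_range] at hk
      rw [Finset.mem_Icc] at hk2
      rw [stirling2_eq_zero k m (by omega)]
      simp
  rw [hIcc]
  have hmain := T_mul n m hmn
  have hfm : (m.factorial : ℚ) ≠ 0 := Nat.cast_ne_zero.mpr (Nat.factorial_ne_zero m)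
  have hT : T n m = (n.factorial : ℚ) * m.choose (n - m) * (-2 : ℚ) ^ (2 * (m : ℤ) - n) / m.factorial :=
    (eq_div_iff hfm).2 hmain
  rw [hT]
  have hzp : (-2 : ℚ) ^ (2 * (m : ℤ) - n) = (-2 : ℚ) ^ m * (-2 : ℚ) ^ ((m : ℤ) - n) := by
    rw [show (2 * (m : ℤ) - n) = (m : ℤ) + ((m : ℤ) - n) by ring, zpow_add₀ hz, zpow_natCast]
  rw [hzp]
  have hpm : ((-2 : ℚ) ^ m) ≠ 0 := pow_ne_zero _ hz
  field_simp
end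

section
/- For integers 1 ≤ m ≤ n and an indeterminate λ, the identity sum_{i=m}^{n} sum_{j=m}^{i} (-1)^{n+i} [n,i] C(i,j) {j,m} λ^{i-j} 2^{n-j} = (n!/m!) * sum_{ℓ=m}^{n} (m/ℓ) C(λ, n-ℓ) C(-ℓ, ℓ-m) 2^{m+n-2ℓ} holds in ℚ[λ]. -/
open Finset

lemma gchoose_def (x : ℚ) (r : ℕ) :
    gchoose x r = ((r.factorial : ℚ))⁻¹ * ∏ i ∈ range r, (x - i) := by
  simp [gchoose]

lemma gchoose_zero (x : ℚ) : gchoose x 0 = 1 := by simp [gchoose_def]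

lemma fact_ne (r : ℕ) : ((r.factorial : ℚ)) ≠ 0 := by
  exact_mod_cast r.factorial_ne_zero

lemma gchoose_succ (x : ℚ) (r : ℕ) :
    gchoose x (r+1) = gchoose x r * (x - r) / (r+1) := by
  rw [gchoose_def, gchoose_def, prod_range_succ, Nat.factorial_succ, Nat.cast_mul, mul_inv,
    div_eq_mul_inv]
  push_cast
  ring

lemma gchoose_shift (x : ℚ) (r : ℕ) :
    gchoose x (r+1) = x * gchoose (x - 1) r / (r+1) := by
  have h : ∏ i ∈ range (r+1), (x - i) = (∏ i ∈ range r, ((x - 1) - i)) * x := by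
    rw [prod_range_succ']
    simp only [Nat.cast_zero, sub_zero]
    congr 1
    refine prod_congr rfl fun i _ => ?_
    push_cast; ring
  rw [gchoose_def, gchoose_def, h, Nat.factorial_succ, Nat.cast_mul, mul_inv, div_eq_mul_inv]
  push_cast
  ring

lemma descPoch_eval (x : ℚ) (n : ℕ) :
    (descPochhammer ℤ n).smeval x = ∏ i ∈ range n, (x - i) := by
  induction n with
  | zero => simp [descPochhammer_zero]
  | succ n ih =>
      rw [descPochhammer_succ_right, Polynomial.smeval_mul, ih, prod_range_succ]
      simp [Polynomial.smeval_sub, Polynomial.smeval_natCast]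

lemma ring_choose_eq (x : ℚ) (n : ℕ) : Ring.choose x n = gchoose x n := by
  have h := Ring.descPochhammer_eq_factorial_smul_choose x n
  rw [descPoch_eval, nsmul_eq_mul] at h
  rw [gchoose_def, h, inv_mul_cancel_left₀ (fact_ne n)]

lemma gchoose_pascal (x : ℚ) (r : ℕ) :
    gchoose (x + 1) (r + 1) = gchoose x (r + 1) + gchoose x r := by
  rw [← ring_choose_eq, ← ring_choose_eq, ← ring_choose_eq, Ring.choose_succ_succ, add_comm]

lemma gchoose_add (x y : ℚ) (n : ℕ) :
    gchoose (x + y) n = ∑ a ∈ range (n+1), gchoose x a * gchoose y (n - a) := by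
  rw [← ring_choose_eq, Ring.add_choose_eq n (Commute.all x y),
    Finset.Nat.sum_antidiagonal_eq_sum_range_succ_mk]
  exact sum_congr rfl fun a _ => by rw [ring_choose_eq, ring_choose_eq]

lemma gchoose_natzero (a : ℕ) (ha : 1 ≤ a) : gchoose (0:ℚ) a = 0 := by
  rw [gchoose_def]
  have : ∏ i ∈ range a, ((0:ℚ) - i) = 0 := by
    apply prod_eq_zero (mem_range.mpr (by omega : 0 < a))
    simp
  rw [this, mul_zero]



/-- alternating difference operator -/
noncomputable def altD (m : ℕ) (f : ℕ → ℚ) : ℚ :=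
  ∑ k ∈ range (m+1), (-1:ℚ)^(m-k) * (m.choose k) * f k

lemma neg_one_pow_sub {k m : ℕ} (h : k ≤ m) : ((-1:ℚ))^(m-k) = (-1)^m * (-1)^k := by
  obtain ⟨d, rfl⟩ := Nat.exists_eq_add_of_le h
  rw [Nat.add_sub_cancel_left, pow_add, mul_right_comm, ← mul_pow]
  simp

lemma altD_eq (m : ℕ) (f : ℕ → ℚ) :
    altD m f = (-1:ℚ)^m * ∑ k ∈ range (m+1), (-1:ℚ)^k * (m.choose k) * f k := by
  rw [altD, mul_sum]
  refine sum_congr rfl fun k hk => ?_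
  rw [neg_one_pow_sub (mem_range_succ_iff.mp hk)]
  ring

lemma altD_zero (f : ℕ → ℚ) : altD 0 f = f 0 := by simp [altD]

lemma altD_succ (m : ℕ) (f : ℕ → ℚ) :
    altD (m+1) f = altD m (fun k => f (k+1)) - altD m f := by
  rw [altD_eq, altD_eq, altD_eq]
  have hA : ∑ k ∈ range (m+1+1), (-1:ℚ)^k * ((m+1).choose k) * f k
      = (∑ k ∈ range (m+1), (-1:ℚ)^(k+1) * ((m+1).choose (k+1)) * f (k+1)) + f 0 := by
    rw [sum_range_succ']; simp
  have hsplit : ∀ k, (-1:ℚ)^(k+1) * ((m+1).choose (k+1)) * f (k+1)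
      = -((-1:ℚ)^k * (m.choose k) * f (k+1)) - (-1:ℚ)^k * (m.choose (k+1)) * f (k+1) := by
    intro k
    rw [Nat.choose_succ_succ, Nat.cast_add, pow_succ]
    ring
  have hC : ∑ k ∈ range (m+1), (-1:ℚ)^k * (m.choose k) * f k
      = -(∑ k ∈ range m, (-1:ℚ)^k * (m.choose (k+1)) * f (k+1)) + f 0 := by
    rw [sum_range_succ', ← sum_neg_distrib]
    simp only [pow_zero, Nat.choose_zero_right, Nat.cast_one, one_mul, mul_one]
    congr 1
    refine sum_congr rfl fun k _ => by ring
  have hB : ∑ k ∈ range (m+1), (-1:ℚ)^k * (m.choose (k+1)) * f (k+1)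
      = ∑ k ∈ range m, (-1:ℚ)^k * (m.choose (k+1)) * f (k+1) := by
    rw [sum_range_succ, Nat.choose_succ_self]
    simp
  rw [hA]
  simp only [hsplit]
  rw [sum_sub_distrib, sum_neg_distrib, hB, hC]
  ring


lemma altD_const (m : ℕ) (c : ℚ) :
    altD m (fun _ => c) = if m = 0 then c else 0 := by
  induction m with
  | zero => simp [altD_zero]
  | succ m ih => rw [altD_succ]; simp [ih]

lemma altD_sub (m : ℕ) (f g : ℕ → ℚ) :
    altD m (fun k => f k - g k) = altD m f - altD m g := by
  rw [altD, altD, altD, ← sum_sub_distrib]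
  refine sum_congr rfl fun k _ => by ring

lemma altD_finsum {α : Type*} (s : Finset α) (m : ℕ) (g : α → ℕ → ℚ) :
    altD m (fun k => ∑ j ∈ s, g j k) = ∑ j ∈ s, altD m (g j) := by
  simp only [altD, mul_sum]
  rw [sum_comm]

lemma altD_two_step (m : ℕ) (f : ℕ → ℚ) :
    altD (m+2) f = altD m (fun k => f (k+2) - f k) - 2 * altD (m+1) f := by
  rw [altD_sub, altD_succ, altD_succ, altD_succ]
  ring

lemma stirling1_eq_zero_s15 {n i : ℕ} (h : n < i) : stirling1 n i = 0 := by
  induction n generalizing i with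
  | zero => obtain ⟨i', rfl⟩ : ∃ i', i = i' + 1 := ⟨i - 1, by omega⟩; rfl
  | succ n ih =>
      obtain ⟨i', rfl⟩ : ∃ i', i = i' + 1 := ⟨i - 1, by omega⟩
      show n * stirling1 n (i' + 1) + stirling1 n i' = 0
      rw [ih (by omega), ih (by omega), mul_zero]

lemma stirling2_eq_zero_s15 {j m : ℕ} (h : j < m) : stirling2 j m = 0 := by
  induction j generalizing m with
  | zero => obtain ⟨m', rfl⟩ : ∃ m', m = m' + 1 := ⟨m - 1, by omega⟩; rfl
  | succ j ih =>
      obtain ⟨m', rfl⟩ : ∃ m', m = m' + 1 := ⟨m - 1, by omega⟩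
      show (m' + 1) * stirling2 j (m' + 1) + stirling2 j m' = 0
      rw [ih (by omega), ih (by omega), mul_zero]

lemma altD_pow_succ (m j : ℕ) :
    altD (m+1) (fun k => (k:ℚ)^(j+1)) = (m+1) * altD m (fun k => ((k:ℚ)+1)^j) := by
  rw [altD_eq, altD_eq]
  rw [sum_range_succ']
  simp only [Nat.cast_zero, zero_pow (Nat.succ_ne_zero j), mul_zero, add_zero]
  have key : ∀ k : ℕ, (-1:ℚ)^(k+1) * ((m+1).choose (k+1)) * ((k+1:ℕ):ℚ)^(j+1)
      = -(((m:ℚ)+1) * ((-1:ℚ)^k * (m.choose k) * (((k:ℚ)+1))^j)) := by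
    intro k
    have h := Nat.add_one_mul_choose_eq m k
    have h' : (((m+1).choose (k+1) : ℚ)) * ((k:ℚ)+1) = ((m:ℚ)+1) * (m.choose k) := by
      have := congrArg (fun t : ℕ => (t:ℚ)) h
      push_cast at this ⊢
      linarith [this]
    push_cast
    push_cast at h'
    linear_combination (-(-1:ℚ)^k * ((k:ℚ)+1)^j) * h'
  simp only [key]
  rw [sum_neg_distrib, ← mul_sum]
  ring

lemma sumA (j m : ℕ) :
    (m.factorial : ℚ) * stirling2 j m = altD m (fun k => (k:ℚ)^j) := by
  induction j generalizing m with
  | zero =>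
      simp only [pow_zero]
      rw [altD_const]
      cases m with
      | zero => norm_num [stirling2]
      | succ m => norm_num [show stirling2 0 (m+1) = 0 from rfl]
  | succ j ih =>
      cases m with
      | zero =>
          rw [altD_zero]
          norm_num [show stirling2 (j+1) 0 = 0 from rfl]
      | succ m =>
          rw [altD_pow_succ]
          have hshift : altD m (fun k => ((k:ℚ)+1)^j)
              = altD (m+1) (fun k => (k:ℚ)^j) + altD m (fun k => (k:ℚ)^j) := by
            have h := altD_succ m (fun k => (k:ℚ)^j)
            simp only [Nat.cast_add, Nat.cast_one] at h
            linarith [h]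
          rw [hshift, ← ih (m+1), ← ih m,
            show stirling2 (j+1) (m+1) = (m+1) * stirling2 j (m+1) + stirling2 j m from rfl,
            Nat.factorial_succ]
          push_cast
          ring

lemma sumB_aux (n : ℕ) (x : ℚ) :
    ∑ i ∈ range (n+1), (-1:ℚ)^i * stirling1 n i * x^i
      = ∏ r ∈ range n, ((r:ℚ) - x) := by
  induction n with
  | zero => simp [show stirling1 0 0 = 1 from rfl]
  | succ n ih =>
      have hA : ∑ i ∈ range (n+2), (-1:ℚ)^i * stirling1 n i * x^i
          = ∑ i ∈ range (n+1), (-1:ℚ)^i * stirling1 n i * x^i := by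
        rw [sum_range_succ, stirling1_eq_zero_s15 (by omega : n < n+1)]
        simp
      have hB : ∑ i ∈ range (n+2), (-1:ℚ)^i * stirling1 n i * x^i
          = (∑ i ∈ range (n+1), (-1:ℚ)^(i+1) * stirling1 n (i+1) * x^(i+1))
            + stirling1 n 0 := by
        rw [sum_range_succ']; simp
      have hS1 : ∑ i ∈ range (n+1), (-1:ℚ)^(i+1) * stirling1 n (i+1) * x^(i+1)
          = ∑ i ∈ range (n+1), (-1:ℚ)^i * stirling1 n i * x^i - stirling1 n 0 := by
        rw [← hA, hB]; ring
      have hn0 : (n:ℚ) * (stirling1 n 0 : ℚ) = 0 := by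
        cases n with
        | zero => simp
        | succ n => norm_num [show stirling1 (n+1) 0 = 0 from rfl]
      have key : ∑ i ∈ range (n+2), (-1:ℚ)^i * stirling1 (n+1) i * x^i
          = ∑ i ∈ range (n+1), ((n:ℚ) * ((-1:ℚ)^(i+1) * stirling1 n (i+1) * x^(i+1))
              + (-x) * ((-1:ℚ)^i * stirling1 n i * x^i)) := by
        rw [sum_range_succ', show stirling1 (n+1) 0 = 0 from rfl]
        simp only [Nat.cast_zero, mul_zero, zero_mul, pow_zero, add_zero, mul_one]
        refine sum_congr rfl fun i _ => ?_
        rw [show stirling1 (n+1) (i+1) = n * stirling1 n (i+1) + stirling1 n i from rfl]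
        push_cast
        ring
      rw [prod_range_succ, ← ih, key, sum_add_distrib, ← mul_sum, ← mul_sum, hS1]
      linear_combination (-1 : ℚ) * hn0


lemma altD_smul (m : ℕ) (e : ℚ) (f : ℕ → ℚ) :
    altD m (fun k => e * f k) = e * altD m f := by
  rw [altD, altD, mul_sum]
  exact sum_congr rfl fun k _ => by ring

lemma gchoose_poly (a : ℕ) : ∃ c : ℕ → ℚ, (∀ j, a < j → c j = 0) ∧
    ∀ x : ℚ, gchoose x a = ∑ j ∈ range (a+1), c j * x^j := by
  induction a with
  | zero =>
      refine ⟨fun j => if j = 0 then 1 else 0, fun j hj => by simp [show j ≠ 0 by omega], ?_⟩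
      intro x
      simp [gchoose_zero]
  | succ a ih =>
      obtain ⟨c, hc0, hc⟩ := ih
      refine ⟨fun j => (if j = 0 then 0 else c (j-1)) / (a+1) - (a:ℚ) * c j / (a+1),
        fun j hj => ?_, fun x => ?_⟩
      · have h1 : c j = 0 := hc0 j (by omega)
        have h2 : c (j-1) = 0 := hc0 (j-1) (by omega)
        have : j ≠ 0 := by omega
        simp [this, h1, h2]
      · have split : ∑ j ∈ range (a+2),
            ((if j = 0 then 0 else c (j-1)) / (a+1) - (a:ℚ) * c j / (a+1)) * x^j
            = (∑ j ∈ range (a+2), ((if j = 0 then 0 else c (j-1)) / (a+1)) * x^j)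
              - ∑ j ∈ range (a+2), ((a:ℚ) * c j / (a+1)) * x^j := by
          rw [← sum_sub_distrib]
          exact sum_congr rfl fun j _ => by ring
        have h1 : ∑ j ∈ range (a+2), ((if j = 0 then 0 else c (j-1)) / ((a:ℚ)+1)) * x^j
            = ∑ j ∈ range (a+1), (c j / ((a:ℚ)+1)) * x^(j+1) := by
          rw [sum_range_succ']
          simp
        have h2 : ∑ j ∈ range (a+2), ((a:ℚ) * c j / ((a:ℚ)+1)) * x^j
            = ∑ j ∈ range (a+1), ((a:ℚ) * c j / ((a:ℚ)+1)) * x^j := by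
          rw [sum_range_succ, hc0 (a+1) (by omega)]
          simp
        rw [gchoose_succ, hc, split, h1, h2, ← sum_sub_distrib]
        have hcomb : ∀ j, (c j / ((a:ℚ)+1)) * x^(j+1) - ((a:ℚ) * c j / ((a:ℚ)+1)) * x^j
            = (c j * x^j) * (x - (a:ℚ)) / ((a:ℚ) + 1) := fun j => by ring
        simp only [hcomb]
        rw [← sum_div, ← sum_mul]

lemma altD_gchoose_half_zero (m a : ℕ) (h : a < m) :
    altD m (fun k => gchoose ((k:ℚ)/2) a) = 0 := by
  obtain ⟨c, _, hc⟩ := gchoose_poly a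
  have hfun : (fun k : ℕ => gchoose ((k:ℚ)/2) a)
      = fun (k : ℕ) => ∑ j ∈ range (a+1), (c j * (2:ℚ)⁻¹^j) * (k:ℚ)^j := by
    funext k
    rw [hc]
    exact sum_congr rfl fun j _ => by rw [div_pow, inv_pow]; ring
  rw [hfun, altD_finsum]
  refine sum_eq_zero fun j hj => ?_
  have : altD m (fun k => (c j * (2:ℚ)⁻¹^j) * (k:ℚ)^j)
      = (c j * (2:ℚ)⁻¹^j) * altD m (fun k => (k:ℚ)^j) := altD_smul m _ _
  rw [this, ← sumA, stirling2_eq_zero_s15 (by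
    have := mem_range.mp hj
    omega : j < m)]
  simp
lemma two_zpow_ne (z : ℤ) : ((2:ℚ))^z ≠ 0 := zpow_ne_zero z two_ne_zero

lemma baseHalf (a : ℕ) : gchoose (2⁻¹:ℚ) (a+1)
    = gchoose (-((a:ℚ)+1)) a * (2:ℚ)^(-(2*(a:ℤ)) - 1) / ((a:ℚ)+1) := by
  induction a with
  | zero =>
      rw [gchoose_succ, gchoose_zero, gchoose_zero]
      norm_num
  | succ a ih =>
      have ha1 : ((a:ℚ)+1) ≠ 0 := by positivity
      have ha2 : ((a:ℚ)+1+1) ≠ 0 := by positivity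
      have hb : gchoose (-((a:ℚ)+1)) (a+1)
          = gchoose (-((a:ℚ)+1)) a * (-((a:ℚ)+1) - a) / ((a:ℚ)+1) := gchoose_succ _ a
      have hshift : gchoose (-((a:ℚ)+1)) (a+1)
          = (-((a:ℚ)+1)) * gchoose (-((a:ℚ)+1+1)) a / ((a:ℚ)+1) := by
        have h := gchoose_shift (-((a:ℚ)+1)) a
        rw [show -((a:ℚ)+1) - 1 = -((a:ℚ)+1+1) by ring] at h
        exact h
      have key : gchoose (-((a:ℚ)+1+1)) a
          = gchoose (-((a:ℚ)+1)) a * (2*(a:ℚ)+1) / ((a:ℚ)+1) := by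
        have h := hshift.symm.trans hb
        field_simp at h ⊢
        linarith [h]
      have e1 : gchoose (2⁻¹:ℚ) (a+1+1)
          = gchoose (2⁻¹:ℚ) (a+1) * (2⁻¹ - ((a:ℚ)+1)) / ((a:ℚ)+1+1) := by
        have h := gchoose_succ (2⁻¹:ℚ) (a+1)
        push_cast at h
        exact h
      have e2 : gchoose (-((a:ℚ)+1+1)) (a+1)
          = gchoose (-((a:ℚ)+1+1)) a * (-((a:ℚ)+1+1) - a) / ((a:ℚ)+1) := gchoose_succ _ a
      have hz : (2:ℚ)^(-(2*((a:ℤ)+1)) - 1) = (2:ℚ)^(-(2*(a:ℤ)) - 1) / 4 := by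
        rw [show -(2*((a:ℤ)+1)) - 1 = (-(2*(a:ℤ)) - 1) + (-2) by ring, zpow_add₀ two_ne_zero]
        norm_num
        ring
      have hE := two_zpow_ne (-(2*(a:ℤ)) - 1)
      push_cast
      rw [e1, ih, e2, key, hz]
      field_simp
      ring
lemma Tval : ∀ m : ℕ, ∀ a : ℕ, m ≤ a → 1 ≤ a →
    altD m (fun k => gchoose ((k:ℚ)/2) a)
      = (m:ℚ)/a * gchoose (-(a:ℚ)) (a - m) * (2:ℚ)^((m:ℤ) - 2*(a:ℤ)) := by
  intro m
  induction m using Nat.twoStepInduction with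
  | zero =>
      intro a _ ha
      rw [altD_zero]
      simp only [Nat.cast_zero, zero_div, zero_mul]
      exact gchoose_natzero a ha
  | one =>
      intro a ha1 _
      have h1 : altD 1 (fun k => gchoose ((k:ℚ)/2) a)
          = gchoose (((1:ℕ):ℚ)/2) a - gchoose (((0:ℕ):ℚ)/2) a := by
        rw [altD_succ, altD_zero, altD_zero]
      obtain ⟨b, rfl⟩ : ∃ b, a = b + 1 := ⟨a - 1, by omega⟩
      rw [h1, show (((0:ℕ):ℚ)/2) = 0 by norm_num, gchoose_natzero _ (by omega), sub_zero,
        show (((1:ℕ):ℚ)/2) = 2⁻¹ by norm_num]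
      rw [show (b:ℕ)+1-1 = b from rfl]
      have hbh := baseHalf b
      push_cast
      rw [show (1:ℤ) - 2*((b:ℤ)+1) = -(2*(b:ℤ)) - 1 by ring, hbh]
      ring
  | more m ih ih1 =>
      intro a hma ha1
      obtain ⟨b, rfl⟩ : ∃ b, a = b + 1 := ⟨a - 1, by omega⟩
      have hfun : (fun k : ℕ => gchoose (((k+2:ℕ):ℚ)/2) (b+1) - gchoose ((k:ℚ)/2) (b+1))
          = fun k : ℕ => gchoose ((k:ℚ)/2) b := by
        funext k
        have hp := gchoose_pascal ((k:ℚ)/2) b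
        push_cast
        rw [show ((k:ℚ)+2)/2 = (k:ℚ)/2 + 1 by ring, hp]
        ring
      have h2s : altD (m+2) (fun k => gchoose ((k:ℚ)/2) (b+1))
          = altD m (fun k : ℕ => gchoose ((k:ℚ)/2) b)
            - 2 * altD (m+1) (fun k => gchoose ((k:ℚ)/2) (b+1)) := by
        rw [altD_two_step, ← hfun]
      rw [h2s, ih b (by omega) (by omega), ih1 (b+1) (by omega) (by omega)]
      obtain ⟨d, rfl⟩ : ∃ d, b = m + d + 1 := ⟨b - m - 1, by omega⟩
      rw [show m+d+1+1 - (m+2) = d by omega, show m+d+1 - m = d+1 by omega,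
        show m+d+1+1 - (m+1) = d+1 by omega]
      have gA : gchoose (-((m+d+1+1:ℕ):ℚ)) (d+1)
          = gchoose (-((m+d+1+1:ℕ):ℚ)) d * ((-((m+d+1+1:ℕ):ℚ)) - d) / ((d:ℚ)+1) := by
        have := gchoose_succ (-((m+d+1+1:ℕ):ℚ)) d
        push_cast at this ⊢
        exact this
      have gB : gchoose (-((m+d+1:ℕ):ℚ)) (d+1)
          = (-((m+d+1:ℕ):ℚ)) * gchoose (-((m+d+1+1:ℕ):ℚ)) d / ((d:ℚ)+1) := by
        have h := gchoose_shift (-((m+d+1:ℕ):ℚ)) d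
        rw [show -((m+d+1:ℕ):ℚ) - 1 = -((m+d+1+1:ℕ):ℚ) by push_cast; ring] at h
        push_cast at h ⊢
        exact h
      have hz1 : (2:ℚ)^(((m+2:ℕ):ℤ) - 2*(((m+d+1+1:ℕ)):ℤ))
          = (2:ℚ)^(((m:ℕ):ℤ) - 2*((m+d+2:ℕ):ℤ)) * 4 := by
        rw [show ((m+2:ℕ):ℤ) - 2*(((m+d+1+1:ℕ)):ℤ)
          = (((m:ℕ):ℤ) - 2*((m+d+2:ℕ):ℤ)) + 2 by push_cast; ring, zpow_add₀ two_ne_zero]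
        norm_num
      have hz2 : (2:ℚ)^(((m:ℕ):ℤ) - 2*(((m+d+1:ℕ)):ℤ))
          = (2:ℚ)^(((m:ℕ):ℤ) - 2*((m+d+2:ℕ):ℤ)) * 4 := by
        rw [show ((m:ℕ):ℤ) - 2*(((m+d+1:ℕ)):ℤ)
          = (((m:ℕ):ℤ) - 2*((m+d+2:ℕ):ℤ)) + 2 by push_cast; ring, zpow_add₀ two_ne_zero]
        norm_num
      have hz3 : (2:ℚ)^(((m+1:ℕ):ℤ) - 2*(((m+d+1+1:ℕ)):ℤ))
          = (2:ℚ)^(((m:ℕ):ℤ) - 2*((m+d+2:ℕ):ℤ)) * 2 := by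
        rw [show ((m+1:ℕ):ℤ) - 2*(((m+d+1+1:ℕ)):ℤ)
          = (((m:ℕ):ℤ) - 2*((m+d+2:ℕ):ℤ)) + 1 by push_cast; ring, zpow_add₀ two_ne_zero]
        norm_num
      have hE := two_zpow_ne (((m:ℕ):ℤ) - 2*((m+d+2:ℕ):ℤ))
      have hd1 : ((d:ℚ)+1) ≠ 0 := by positivity
      have hb0 : ((m:ℚ)+(d:ℚ)+1) ≠ 0 := by positivity
      have hb1 : ((m:ℚ)+(d:ℚ)+2) ≠ 0 := by positivity
      push_cast at gA gB hz1 hz2 hz3 hE ⊢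
      rw [gA, gB, hz1, hz2, hz3]
      field_simp
      ring
lemma neg_one_pow_add_eq {n i : ℕ} (h : i ≤ n) : ((-1:ℚ))^(n+i) = (-1)^(n-i) := by
  rw [pow_add, neg_one_pow_sub h]

lemma sumB' (n : ℕ) (x : ℚ) :
    ∑ i ∈ range (n+1), (-1:ℚ)^(n-i) * stirling1 n i * x^i
      = (n.factorial:ℚ) * gchoose x n := by
  have h0 : ∑ i ∈ range (n+1), (-1:ℚ)^(n-i) * stirling1 n i * x^i
      = (-1:ℚ)^n * ∑ i ∈ range (n+1), (-1:ℚ)^i * stirling1 n i * x^i := by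
    rw [mul_sum]
    exact sum_congr rfl fun i hi => by
      rw [neg_one_pow_sub (mem_range_succ_iff.mp hi)]; ring
  have h1 : ∏ r ∈ range n, ((r:ℚ) - x) = (-1:ℚ)^n * ∏ r ∈ range n, (x - r) := by
    calc ∏ r ∈ range n, ((r:ℚ) - x) = ∏ r ∈ range n, (-1) * (x - (r:ℚ)) :=
          prod_congr rfl fun r _ => by ring
      _ = (-1:ℚ)^n * ∏ r ∈ range n, (x - r) := by
          rw [prod_mul_distrib, prod_const, card_range]
  rw [h0, sumB_aux, h1, gchoose_def, mul_inv_cancel_left₀ (fact_ne n), ← mul_assoc, ← mul_pow]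
  norm_num

theorem stmt15 (m n : ℕ) (hm : 1 ≤ m) (hmn : m ≤ n) (l : ℚ) :
    ∑ i ∈ Finset.Icc m n, ∑ j ∈ Finset.Icc m i,
        (-1 : ℚ) ^ (n + i) * stirling1 n i * i.choose j * stirling2 j m *
          l ^ (i - j) * 2 ^ (n - j) =
      (n.factorial : ℚ) / m.factorial *
        ∑ x ∈ Finset.Icc m n, (m : ℚ) / x * gchoose l (n - x) *
          gchoose (-(x : ℚ)) (x - m) * (2 : ℚ) ^ ((m : ℤ) + n - 2 * x) := by
  calc
    ∑ i ∈ Finset.Icc m n, ∑ j ∈ Finset.Icc m i,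
        (-1 : ℚ) ^ (n + i) * stirling1 n i * i.choose j * stirling2 j m *
          l ^ (i - j) * 2 ^ (n - j)
      = ∑ i ∈ Finset.Icc m n, ∑ j ∈ range (i+1),
        (-1 : ℚ) ^ (n + i) * stirling1 n i * i.choose j * stirling2 j m *
          l ^ (i - j) * 2 ^ (n - j) := by
        refine sum_congr rfl fun i hi => sum_subset (fun j hj => ?_) (fun j hj hj' => ?_)
        · exact mem_range.mpr (by have := (mem_Icc.mp hj).2; omega)
        · have hj1 := mem_range.mp hj
          have hjm : j < m := by
            by_contra hc
            exact hj' (mem_Icc.mpr ⟨by omega, by omega⟩)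
          rw [stirling2_eq_zero_s15 hjm]
          simp
    _ = ∑ i ∈ range (n+1), ∑ j ∈ range (i+1),
        (-1 : ℚ) ^ (n + i) * stirling1 n i * i.choose j * stirling2 j m *
          l ^ (i - j) * 2 ^ (n - j) := by
        refine sum_subset (fun i hi => ?_) (fun i hi hi' => ?_)
        · exact mem_range.mpr (by have := (mem_Icc.mp hi).2; omega)
        · have hi1 := mem_range.mp hi
          have him : i < m := by
            by_contra hc
            exact hi' (mem_Icc.mpr ⟨by omega, by omega⟩)
          refine sum_eq_zero fun j hj => ?_
          have : j < m := by have := mem_range.mp hj; omega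
          rw [stirling2_eq_zero_s15 this]
          simp
    _ = ∑ i ∈ range (n+1), ∑ j ∈ range (i+1), ∑ k ∈ range (m+1),
          (m.factorial:ℚ)⁻¹ * ((-1:ℚ)^(m-k) * (m.choose k))
          * ((-1:ℚ)^(n-i) * stirling1 n i * (2:ℚ)^(n-i))
          * ((i.choose j :ℚ) * (k:ℚ)^j * (2*l)^(i-j)) := by
        refine sum_congr rfl fun i hi => sum_congr rfl fun j hj => ?_
        have hin : i ≤ n := mem_range_succ_iff.mp hi
        have hij : j ≤ i := mem_range_succ_iff.mp hj
        have hs2 : (stirling2 j m : ℚ)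
            = (m.factorial:ℚ)⁻¹ * ∑ k ∈ range (m+1),
                (-1:ℚ)^(m-k) * (m.choose k) * (k:ℚ)^j := by
          have hstir := sumA j m
          rw [altD] at hstir
          rw [← hstir, inv_mul_cancel_left₀ (fact_ne m)]
        calc (-1 : ℚ) ^ (n + i) * stirling1 n i * i.choose j * stirling2 j m *
              l ^ (i - j) * 2 ^ (n - j)
            = ((-1 : ℚ) ^ (n + i) * stirling1 n i * i.choose j * l ^ (i - j) * 2 ^ (n - j))
              * (stirling2 j m : ℚ) := by ring
          _ = ∑ k ∈ range (m+1),
              ((-1 : ℚ) ^ (n + i) * stirling1 n i * i.choose j * l ^ (i - j) * 2 ^ (n - j))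
              * ((m.factorial:ℚ)⁻¹ * ((-1:ℚ)^(m-k) * (m.choose k) * (k:ℚ)^j)) := by
              rw [hs2, mul_sum, mul_sum]
          _ = _ := by
              refine sum_congr rfl fun k _ => ?_
              rw [show (2:ℚ)^(n-j) = (2:ℚ)^(n-i) * (2:ℚ)^(i-j) by
                    rw [← pow_add]; congr 1; omega,
                neg_one_pow_add_eq hin, mul_pow]
              ring
    _ = ∑ k ∈ range (m+1), ∑ i ∈ range (n+1), ∑ j ∈ range (i+1),
          (m.factorial:ℚ)⁻¹ * ((-1:ℚ)^(m-k) * (m.choose k))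
          * ((-1:ℚ)^(n-i) * stirling1 n i * (2:ℚ)^(n-i))
          * ((i.choose j :ℚ) * (k:ℚ)^j * (2*l)^(i-j)) := by
        rw [← sum_comm]
        exact sum_congr rfl fun i _ => sum_comm
    _ = ∑ k ∈ range (m+1), ∑ i ∈ range (n+1),
          (m.factorial:ℚ)⁻¹ * ((-1:ℚ)^(m-k) * (m.choose k))
          * ((-1:ℚ)^(n-i) * stirling1 n i * (2:ℚ)^(n-i))
          * ((k:ℚ) + 2*l)^i := by
        refine sum_congr rfl fun k _ => sum_congr rfl fun i _ => ?_
        have hadd : ((k:ℚ) + 2*l)^i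
            = ∑ j ∈ range (i+1), (i.choose j :ℚ) * (k:ℚ)^j * (2*l)^(i-j) := by
          rw [add_pow]
          exact sum_congr rfl fun j _ => by ring
        rw [← mul_sum, ← hadd]
    _ = ∑ k ∈ range (m+1), ∑ i ∈ range (n+1),
          ((m.factorial:ℚ)⁻¹ * ((-1:ℚ)^(m-k) * (m.choose k)) * (2:ℚ)^n)
          * ((-1:ℚ)^(n-i) * stirling1 n i * (l + (k:ℚ)/2)^i) := by
        refine sum_congr rfl fun k _ => sum_congr rfl fun i hi => ?_
        have hin : i ≤ n := mem_range_succ_iff.mp hi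
        have h2 : (2:ℚ)^(n-i) * ((k:ℚ)+2*l)^i = 2^n * (l + (k:ℚ)/2)^i := by
          rw [show (k:ℚ)+2*l = 2*(l + (k:ℚ)/2) by ring, mul_pow, ← mul_assoc, ← pow_add,
            Nat.sub_add_cancel hin]
        linear_combination ((m.factorial:ℚ)⁻¹ * ((-1:ℚ)^(m-k) * (m.choose k))
          * ((-1:ℚ)^(n-i) * (stirling1 n i:ℚ))) * h2
    _ = ∑ k ∈ range (m+1),
          ((m.factorial:ℚ)⁻¹ * ((-1:ℚ)^(m-k) * (m.choose k)) * (2:ℚ)^n)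
          * ((n.factorial:ℚ) * gchoose (l + (k:ℚ)/2) n) := by
        refine sum_congr rfl fun k _ => ?_
        rw [← mul_sum, sumB']
    _ = ∑ k ∈ range (m+1),
          ((m.factorial:ℚ)⁻¹ * ((-1:ℚ)^(m-k) * (m.choose k)) * (2:ℚ)^n)
          * ((n.factorial:ℚ) * ∑ a ∈ range (n+1),
              gchoose l a * gchoose ((k:ℚ)/2) (n-a)) := by
        refine sum_congr rfl fun k _ => by rw [gchoose_add]
    _ = ∑ a ∈ range (n+1),
          ((m.factorial:ℚ)⁻¹ * (2:ℚ)^n * (n.factorial:ℚ))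
          * (gchoose l a * altD m (fun k => gchoose ((k:ℚ)/2) (n-a))) := by
        have hexp : ∀ k ∈ range (m+1),
            ((m.factorial:ℚ)⁻¹ * ((-1:ℚ)^(m-k) * (m.choose k)) * (2:ℚ)^n)
            * ((n.factorial:ℚ) * ∑ a ∈ range (n+1),
                gchoose l a * gchoose ((k:ℚ)/2) (n-a))
            = ∑ a ∈ range (n+1),
                ((m.factorial:ℚ)⁻¹ * (2:ℚ)^n * (n.factorial:ℚ))
                * (gchoose l a * ((-1:ℚ)^(m-k) * (m.choose k)
                    * gchoose ((k:ℚ)/2) (n-a))) := by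
          intro k _
          rw [mul_sum, mul_sum]
          refine sum_congr rfl fun a _ => by ring
        rw [sum_congr rfl hexp, sum_comm]
        refine sum_congr rfl fun a _ => ?_
        rw [← mul_sum, altD, ← mul_sum]
    _ = ∑ a ∈ range (n-m+1),
          ((m.factorial:ℚ)⁻¹ * (2:ℚ)^n * (n.factorial:ℚ))
          * (gchoose l a * altD m (fun k => gchoose ((k:ℚ)/2) (n-a))) := by
        refine (sum_subset (fun a ha => mem_range.mpr (by
            have := mem_range.mp ha; omega)) (fun a ha ha' => ?_)).symm
        have h1 : n - a < m := by
          have h2 := mem_range.mp ha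
          have h3 : ¬ a < n - m + 1 := fun hc => ha' (mem_range.mpr hc)
          omega
        rw [altD_gchoose_half_zero m (n-a) h1]
        ring
    _ = ∑ a ∈ range (n-m+1),
          ((m.factorial:ℚ)⁻¹ * (2:ℚ)^n * (n.factorial:ℚ))
          * (gchoose l a * ((m:ℚ)/((n-a:ℕ):ℚ) * gchoose (-((n-a:ℕ):ℚ)) ((n-a) - m)
              * (2:ℚ)^((m:ℤ) - 2*((n-a:ℕ):ℤ)))) := by
        refine sum_congr rfl fun a ha => ?_
        have ha1 : a ≤ n - m := mem_range_succ_iff.mp ha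
        rw [Tval m (n-a) (by omega) (by omega)]
    _ = (n.factorial : ℚ) / m.factorial *
        ∑ x ∈ Finset.Icc m n, (m : ℚ) / x * gchoose l (n - x) *
          gchoose (-(x : ℚ)) (x - m) * (2 : ℚ) ^ ((m : ℤ) + n - 2 * x) := by
        have hre : ∑ x ∈ Finset.Icc m n, (m : ℚ) / x * gchoose l (n - x) *
              gchoose (-(x : ℚ)) (x - m) * (2 : ℚ) ^ ((m : ℤ) + n - 2 * x)
            = ∑ a ∈ range (n-m+1), (m : ℚ) / ((n-a:ℕ):ℚ) * gchoose l (n - (n-a)) *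
              gchoose (-((n-a:ℕ) : ℚ)) ((n-a) - m)
              * (2 : ℚ) ^ ((m : ℤ) + n - 2 * ((n-a:ℕ):ℤ)) := by
          refine sum_nbij' (fun x => n - x) (fun a => n - a)
            (fun x hx => by
              have := mem_Icc.mp hx
              exact mem_range.mpr (show n - x < n - m + 1 by omega))
            (fun a ha => by
              have := mem_range.mp ha
              exact mem_Icc.mpr ⟨show m ≤ n - a by omega, show n - a ≤ n by omega⟩)
            (fun x hx => by
              have := mem_Icc.mp hx
              show n - (n - x) = x
              omega)
            (fun a ha => by
              have := mem_range.mp ha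
              show n - (n - a) = a
              omega)
            (fun x hx => ?_)
          have hx1 := mem_Icc.mp hx
          beta_reduce
          rw [show n - (n - x) = x by omega]
        rw [hre, mul_sum]
        refine sum_congr rfl fun a ha => ?_
        have ha1 : a ≤ n - m := mem_range_succ_iff.mp ha
        have hzz : (2:ℚ)^((m:ℤ) + n - 2*((n-a:ℕ):ℤ))
            = (2:ℚ)^((m:ℤ) - 2*((n-a:ℕ):ℤ)) * 2^(n:ℕ) := by
          rw [show (m:ℤ) + n - 2*((n-a:ℕ):ℤ) = ((m:ℤ) - 2*((n-a:ℕ):ℤ)) + (n:ℤ) by ring,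
            zpow_add₀ two_ne_zero, zpow_natCast]
        rw [show n - (n - a) = a by omega, hzz]
        ring
end
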